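/- If Φ is a regular symmetric norm and (X, d) is a separable metric space with basepoint x_0, then the metric space S_Φ(X, x_0) of Φ-summable multisets is separable; moreover the finite-rank multisets are dense in S_Φ(X, x_0). -/

import Mathlib

open Filter

/-- A symmetric norm: a norm on the space `c_00` of finitely supported real
sequences (modelled as `ℕ →₀ ℝ`), normalised by `Φ(1,0,0,…) = 1`, and invariant
under permutations of the entries and under replacing entries by their absolute
values. -/
structure SymmetricNorm where
  toFun : (ℕ →₀ ℝ) → ℝ
  nonneg : ∀ ξ, 0 ≤ toFun ξ
  eq_zero : ∀ ξ, toFun ξ = 0 → ξ = 0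
  add_le : ∀ ξ η, toFun (ξ + η) ≤ toFun ξ + toFun η
  smul_eq : ∀ (c : ℝ) (ξ), toFun (c • ξ) = |c| * toFun ξ
  norm_single : toFun (Finsupp.single 0 1) = 1
  perm_invariant : ∀ (π : Equiv.Perm ℕ) (ξ), toFun (Finsupp.equivMapDomain π ξ) = toFun ξ
  abs_invariant : ∀ (ξ : ℕ →₀ ℝ), toFun (Finsupp.mapRange (fun a => |a|) abs_zero ξ) = toFun ξ

/-- The truncation `(ξ_0, …, ξ_{n-1}, 0, 0, …)` of a sequence, as an element of `c_00`. -/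
noncomputable def truncF (ξ : ℕ → ℝ) (n : ℕ) : ℕ →₀ ℝ :=
  ∑ i ∈ Finset.range n, Finsupp.single i (ξ i)

/-- The extension of a symmetric norm to sequences: `Φ(ξ) = lim_n Φ(ξ_0,…,ξ_{n-1},0,0,…)`. -/
noncomputable def SymmetricNorm.ext (Φ : SymmetricNorm) (ξ : ℕ → ℝ) : ℝ :=
  limUnder atTop fun n => Φ.toFun (truncF ξ n)

/-- Membership in the natural domain `ℓ_Φ`: the sequence tends to `0` and the
`Φ`-norms of its truncations converge. -/
def MemLPhi (Φ : SymmetricNorm) (ξ : ℕ → ℝ) : Prop :=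
  Tendsto ξ atTop (nhds 0) ∧ ∃ L, Tendsto (fun n => Φ.toFun (truncF ξ n)) atTop (nhds L)

/-- Membership in `ℓ_Φ^+`: nonnegative `Φ`-summable sequences. -/
def MemLPhiPlus (Φ : SymmetricNorm) (ξ : ℕ → ℝ) : Prop :=
  (∀ i, 0 ≤ ξ i) ∧ MemLPhi Φ ξ

/-- A symmetric norm is regular if `Φ(ξ_{n+1}, ξ_{n+2}, …) → 0` for every `ξ ∈ ℓ_Φ`. -/
def SymmetricNorm.Regular (Φ : SymmetricNorm) : Prop :=
  ∀ ξ : ℕ → ℝ, MemLPhi Φ ξ →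
    Tendsto (fun n => Φ.ext fun i => ξ (n + i)) atTop (nhds 0)

/-- `partialMax ξ k` is the supremum of sums of `k` distinct entries of `ξ`;
for nonnegative `ξ ∈ c_0` this equals `ξ^↓_1 + ⋯ + ξ^↓_k`. -/
noncomputable def partialMax (ξ : ℕ → ℝ) (k : ℕ) : ℝ :=
  sSup ((fun s : Finset ℕ => ∑ i ∈ s, ξ i) '' {s | s.card = k})

/-- The nonincreasing rearrangement `ξ^↓` of a (nonnegative, null) sequence,
defined via `ξ^↓_1 = max ξ_i`, `ξ^↓_1 + ξ^↓_2 = max_{i ≠ j} (ξ_i + ξ_j)`, …. -/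
noncomputable def decRearr (ξ : ℕ → ℝ) (k : ℕ) : ℝ :=
  partialMax ξ (k + 1) - partialMax ξ k
open scoped Classical

variable {X : Type*} [MetricSpace X]

/-- `s : ℕ → X` is an enumeration of the countable multiset `S` in `(X, x₀)`:
every point other than the basepoint occurs in `s` exactly according to its
multiplicity in `S`. -/
def IsEnum (x0 : X) (S : X → ℕ∞) (s : ℕ → X) : Prop :=
  ∀ x, x ≠ x0 → S x = {i : ℕ | s i = x}.encard

/-- A countable multiset in `(X, x₀)`: a multiplicity function in which the
basepoint is the only point of infinite multiplicity and whose support is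
countable. -/
def IsCMultiset (x0 : X) (S : X → ℕ∞) : Prop :=
  S x0 = ⊤ ∧ (∀ x, x ≠ x0 → S x ≠ ⊤) ∧ {x | S x ≠ 0}.Countable

/-- Membership in `S_Φ(X, x₀)`: a countable multiset whose points `s_i` satisfy
`(d(x₀, s_i))_i ∈ ℓ_Φ`. -/
def MemSPhi (Φ : SymmetricNorm) (x0 : X) (S : X → ℕ∞) : Prop :=
  IsCMultiset x0 S ∧ ∃ s : ℕ → X, IsEnum x0 S s ∧ MemLPhi Φ fun i => dist x0 (s i)

/-- The distance `d_Φ(S, T)`: the infimum over pairs of enumerations `(s_i), (t_i)`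
of `S, T` of `Φ(d(s_1,t_1), d(s_2,t_2), …)`. -/
noncomputable def dPhi (Φ : SymmetricNorm) (x0 : X) (S T : X → ℕ∞) : ℝ :=
  sInf {r | ∃ s t : ℕ → X, IsEnum x0 S s ∧ IsEnum x0 T t ∧
    MemLPhi Φ (fun i => dist (s i) (t i)) ∧ r = Φ.ext fun i => dist (s i) (t i)}

/-- The sum of two multisets (addition of multiplicities away from the basepoint). -/
noncomputable def msum (x0 : X) (S T : X → ℕ∞) : X → ℕ∞ := fun x => if x = x0 then ⊤ else S x + T x

/-- The difference of two multisets (subtraction of multiplicities away from the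
basepoint). -/
noncomputable def mdiff (x0 : X) (S T : X → ℕ∞) : X → ℕ∞ := fun x => if x = x0 then ⊤ else S x - T x

/-- The intersection of a multiset with a subset `V ⊆ X`. -/
noncomputable def minter (x0 : X) (S : X → ℕ∞) (V : Set X) : X → ℕ∞ :=
  fun x => if x = x0 then ⊤ else if x ∈ V then S x else 0

/-- The multiset `S` has rank `n`: its total multiplicity away from the basepoint
is `n`, i.e. its non-basepoint part can be listed by a tuple of length `n`. -/
def HasRank (x0 : X) (S : X → ℕ∞) (n : ℕ) : Prop :=
  ∃ f : Fin n → X, (∀ i, f i ≠ x0) ∧ ∀ x, x ≠ x0 → S x = {i : Fin n | f i = x}.encard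
lemma phi_zero (Φ : SymmetricNorm) : Φ.toFun 0 = 0 := by
  have := Φ.smul_eq 0 0; simpa using this

lemma phi_neg (Φ : SymmetricNorm) (v : ℕ →₀ ℝ) : Φ.toFun (-v) = Φ.toFun v := by
  have := Φ.smul_eq (-1) v; simpa using this

lemma phi_single (Φ : SymmetricNorm) (i : ℕ) (c : ℝ) :
    Φ.toFun (Finsupp.single i c) = |c| := by
  have h1 : Finsupp.single i c
      = Finsupp.equivMapDomain (Equiv.swap (0:ℕ) i) (Finsupp.single 0 c) := by
    rw [Finsupp.equivMapDomain_single, Equiv.swap_apply_left]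
  rw [h1, Φ.perm_invariant]
  have h2 : (Finsupp.single (0:ℕ) c) = c • Finsupp.single 0 (1:ℝ) := by
    rw [Finsupp.smul_single, smul_eq_mul, mul_one]
  rw [h2, Φ.smul_eq, Φ.norm_single, mul_one]

lemma truncF_apply (ξ : ℕ → ℝ) (m j : ℕ) :
    truncF ξ m j = if j < m then ξ j else 0 := by
  rw [truncF, Finsupp.finset_sum_apply]
  simp only [Finsupp.single_apply]
  rw [Finset.sum_ite_eq' (Finset.range m) j ξ]
  simp [Finset.mem_range]

lemma truncF_add (a b : ℕ → ℝ) (m : ℕ) :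
    truncF (fun i => a i + b i) m = truncF a m + truncF b m := by
  ext j
  simp only [Finsupp.add_apply, truncF_apply]
  split <;> simp

lemma truncF_succ (ξ : ℕ → ℝ) (m : ℕ) :
    truncF ξ (m+1) = truncF ξ m + Finsupp.single m (ξ m) := by
  rw [truncF, Finset.sum_range_succ]; rfl

lemma phi_trunc_mono (Φ : SymmetricNorm) (ξ : ℕ → ℝ) :
    Monotone fun m => Φ.toFun (truncF ξ m) := by
  apply monotone_nat_of_le_succ
  intro m
  set A := truncF ξ m with hA
  set B := Finsupp.single m (ξ m) with hB
  have hAm : A m = 0 := by rw [hA, truncF_apply]; simp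
  have habs : Finsupp.mapRange (fun a => |a|) abs_zero (A - B)
      = Finsupp.mapRange (fun a => |a|) abs_zero (A + B) := by
    ext j
    simp only [Finsupp.mapRange_apply, Finsupp.sub_apply, Finsupp.add_apply]
    by_cases h : j = m
    · subst h; rw [hAm]; simp
    · rw [hB]; simp [Finsupp.single_apply, Ne.symm h]
  have hσ : Φ.toFun (A - B) = Φ.toFun (A + B) := by
    rw [← Φ.abs_invariant (A - B), habs, Φ.abs_invariant]
  have hrep : A = (2⁻¹ : ℝ) • ((A + B) + (A - B)) := by
    have : (A + B) + (A - B) = (2:ℝ) • A := by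
      ext j; simp [Finsupp.add_apply, Finsupp.sub_apply]; ring
    rw [this, smul_smul]; norm_num
  calc Φ.toFun A = |(2⁻¹:ℝ)| * Φ.toFun ((A+B) + (A-B)) := by rw [← Φ.smul_eq, ← hrep]
    _ ≤ |(2⁻¹:ℝ)| * (Φ.toFun (A+B) + Φ.toFun (A-B)) := by
        apply mul_le_mul_of_nonneg_left (Φ.add_le _ _) (abs_nonneg _)
    _ = Φ.toFun (A + B) := by rw [hσ]; rw [abs_of_pos]; ring; norm_num
    _ = Φ.toFun (truncF ξ (m+1)) := by rw [truncF_succ]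

lemma phi_trunc_le_sum (Φ : SymmetricNorm) (ξ : ℕ → ℝ) (m : ℕ) :
    Φ.toFun (truncF ξ m) ≤ ∑ i ∈ Finset.range m, |ξ i| := by
  induction m with
  | zero => simp [truncF, phi_zero]
  | succ m ih =>
    rw [truncF_succ, Finset.sum_range_succ]
    calc Φ.toFun (truncF ξ m + Finsupp.single m (ξ m))
        ≤ Φ.toFun (truncF ξ m) + Φ.toFun (Finsupp.single m (ξ m)) := Φ.add_le _ _
      _ ≤ _ := by rw [phi_single]; exact add_le_add_left ih _

def shiftPerm (n m : ℕ) : Equiv.Perm ℕ where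
  toFun a := if a < m then a + n else if a < n + m then a - m else a
  invFun b := if b < n then b + m else if b < n + m then b - n else b
  left_inv a := by dsimp only; split_ifs <;> omega
  right_inv b := by dsimp only; split_ifs <;> omega

lemma tendsto_of_monotone_shift {f : ℕ → ℝ} (hf : Monotone f) {n : ℕ} {L : ℝ}
    (h : Tendsto (fun m => f (n + m)) atTop (nhds L)) :
    Tendsto f atTop (nhds L) := by
  have hub : ∀ k, f k ≤ L := by
    intro k
    have h2 : Monotone fun m => f (n + m) := fun a b hab => hf (by omega)
    calc f k ≤ f (n + k) := hf (by omega)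
      _ ≤ L := h2.ge_of_tendsto h k
  have hb : BddAbove (Set.range f) := ⟨L, by rintro _ ⟨k, rfl⟩; exact hub k⟩
  have h1 := tendsto_atTop_ciSup hf hb
  have hL : (⨆ i, f i) = L := by
    apply le_antisymm (ciSup_le hub)
    exact le_of_tendsto h (Eventually.of_forall fun m => le_ciSup hb (n + m))
  rwa [hL] at h1

lemma phi_trunc_shift (Φ : SymmetricNorm) (ξ : ℕ → ℝ) (n m : ℕ) :
    Φ.toFun (truncF (fun i => if i < n then 0 else ξ i) (n + m))
      = Φ.toFun (truncF (fun i => ξ (n + i)) m) := by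
  rw [← Φ.perm_invariant (shiftPerm n m) (truncF (fun i => ξ (n + i)) m)]
  congr 1
  ext j
  rw [Finsupp.equivMapDomain_apply, truncF_apply, truncF_apply]
  have hsymm : (shiftPerm n m).symm j
      = if j < n then j + m else if j < n + m then j - n else j := rfl
  rw [hsymm]
  split_ifs <;> first | rfl | omega | (congr 1; omega)

noncomputable def fmset (x0 : X) (n : ℕ) (q : ℕ → X) : X → ℕ∞ :=
  fun x => if x = x0 then ⊤ else {i : ℕ | i < n ∧ q i = x}.encard

noncomputable def fenum (x0 : X) (n : ℕ) (q : ℕ → X) : ℕ → X :=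
  fun i => if i < n then q i else x0

lemma isEnum_fmset (x0 : X) (n : ℕ) (q : ℕ → X) :
    IsEnum x0 (fmset x0 n q) (fenum x0 n q) := by
  intro x hx
  rw [fmset]
  rw [if_neg hx]
  congr 1
  ext i
  simp only [Set.mem_setOf_eq, fenum]
  by_cases h : i < n
  · simp [h]
  · simp [h, Ne.symm hx]

lemma memSPhi_fmset (Φ : SymmetricNorm) (x0 : X) (n : ℕ) (q : ℕ → X) :
    MemSPhi Φ x0 (fmset x0 n q) := by
  have hev : ∀ i, n ≤ i → dist x0 (fenum x0 n q i) = 0 := by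
    intro i hi; simp [fenum, Nat.not_lt.2 hi]
  refine ⟨⟨if_pos rfl, ?_, ?_⟩, fenum x0 n q, isEnum_fmset x0 n q, ?_, ?_⟩
  · intro x hx
    rw [fmset, if_neg hx]
    exact (((Set.finite_Iio n).subset (fun i hi => hi.1)).encard_lt_top).ne
  · have hsub : {x | fmset x0 n q x ≠ 0} ⊆ insert x0 (q '' Set.Iio n) := by
      intro x hx
      by_cases h : x = x0
      · exact h ▸ Set.mem_insert _ _
      · simp only [Set.mem_setOf_eq, fmset, if_neg h] at hx
        obtain ⟨i, hi⟩ := Set.encard_ne_zero.mp hx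
        exact Set.mem_insert_of_mem _ ⟨i, hi.1, hi.2⟩
    exact Set.Countable.mono hsub (((Set.finite_Iio n).image q).countable.insert x0)
  · apply Tendsto.congr' (f₁ := fun _ => (0:ℝ))
    · filter_upwards [eventually_atTop.mpr ⟨n, fun i hi => (hev i hi)⟩] with i h
      exact h.symm
    · exact tendsto_const_nhds
  · refine ⟨Φ.toFun (truncF (fun i => dist x0 (fenum x0 n q i)) n), ?_⟩
    apply Tendsto.congr' (f₁ := fun _ => Φ.toFun (truncF (fun i => dist x0 (fenum x0 n q i)) n))
    · filter_upwards [eventually_atTop.mpr ⟨n, fun (m : ℕ) (hm : n ≤ m) => hm⟩] with m hm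
      congr 1
      ext j
      rw [truncF_apply, truncF_apply]
      by_cases h1 : j < n
      · rw [if_pos h1, if_pos (lt_of_lt_of_le h1 hm)]
      · rw [if_neg h1]
        by_cases h2 : j < m
        · rw [if_pos h2, hev j (Nat.not_lt.1 h1)]
        · rw [if_neg h2]
    · exact tendsto_const_nhds

lemma hasRank_fmset (x0 : X) (n : ℕ) (q : ℕ → X) :
    ∃ k, HasRank x0 (fmset x0 n q) k := by
  set A : Finset ℕ := (Finset.range n).filter (fun i => q i ≠ x0) with hA
  set g : Fin A.card → ℕ := fun i => ((A.equivFin.symm i : A) : ℕ) with hg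
  refine ⟨A.card, fun i => q (g i), ?_, ?_⟩
  · intro i
    have h := Finset.mem_filter.mp (A.equivFin.symm i).2
    exact h.2
  · intro x hx
    have hginj : Function.Injective g := by
      intro a b hab
      exact A.equivFin.symm.injective (Subtype.ext hab)
    have himg : g '' {i : Fin A.card | q (g i) = x} = {j : ℕ | j < n ∧ q j = x} := by
      ext j
      constructor
      · rintro ⟨i, hi, rfl⟩
        have hm := Finset.mem_filter.mp (A.equivFin.symm i).2
        exact ⟨Finset.mem_range.mp hm.1, hi⟩
      · rintro ⟨hj1, hj2⟩
        have hjA : j ∈ A :=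
          Finset.mem_filter.mpr ⟨Finset.mem_range.mpr hj1, by rw [hj2]; exact hx⟩
        refine ⟨A.equivFin ⟨j, hjA⟩, ?_, ?_⟩
        · show q (g _) = x
          rw [hg]
          simp only [Equiv.symm_apply_apply]
          exact hj2
        · rw [hg]; simp only [Equiv.symm_apply_apply]
    show fmset x0 n q x = _
    rw [fmset, if_neg hx, ← himg, hginj.encard_image _]

lemma sum_cut_le (n k : ℕ) (a : ℕ → ℝ) (ha : ∀ i, 0 ≤ a i) :
    ∑ i ∈ Finset.range k, |if i < n then a i else 0| ≤ ∑ i ∈ Finset.range n, a i := by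
  have h1 : ∑ i ∈ Finset.range k, |if i < n then a i else 0|
      = ∑ i ∈ Finset.range k, (if i < n then a i else 0) := by
    refine Finset.sum_congr rfl fun i _ => ?_
    split
    · exact abs_of_nonneg (ha i)
    · exact abs_zero
  rw [h1]
  have h2 : ∑ i ∈ Finset.range k, (if i < n then a i else 0)
      ≤ ∑ i ∈ Finset.range (max k n), (if i < n then a i else 0) := by
    refine Finset.sum_le_sum_of_subset_of_nonneg
      (Finset.range_subset_range.mpr (le_max_left k n)) fun i _ _ => ?_
    split
    · exact ha i
    · exact le_refl 0
  have h3 : ∑ i ∈ Finset.range n, (if i < n then a i else 0)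
      = ∑ i ∈ Finset.range (max k n), (if i < n then a i else 0) :=
    Finset.sum_subset (Finset.range_subset_range.mpr (le_max_right k n))
      (fun i _ hni => if_neg (by simpa using hni))
  have h4 : ∑ i ∈ Finset.range n, (if i < n then a i else 0)
      = ∑ i ∈ Finset.range n, a i :=
    Finset.sum_congr rfl fun i hi => if_pos (Finset.mem_range.mp hi)
  rw [← h4]
  rw [h3]
  exact h2

lemma dPhi_bddBelow (Φ : SymmetricNorm) (x0 : X) (S T : X → ℕ∞) :
    BddBelow {r | ∃ s t : ℕ → X, IsEnum x0 S s ∧ IsEnum x0 T t ∧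
      MemLPhi Φ (fun i => dist (s i) (t i)) ∧ r = Φ.ext fun i => dist (s i) (t i)} := by
  refine ⟨0, ?_⟩
  rintro r ⟨s, t, _, _, ⟨_, L, hL⟩, rfl⟩
  rw [SymmetricNorm.ext, hL.limUnder_eq]
  exact ge_of_tendsto' hL fun m => Φ.nonneg _

lemma key_approx (Φ : SymmetricNorm) (hΦ : Φ.Regular) (x0 : X) (S : X → ℕ∞)
    (hS : MemSPhi Φ x0 S) {Q : Set X} (hQd : Dense Q) {ε : ℝ} (hε : 0 < ε) :
    ∃ (n : ℕ) (q : ℕ → X), (∀ i, i < n → q i ∈ Q) ∧ dPhi Φ x0 S (fmset x0 n q) < ε := by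
  obtain ⟨hCM, s, hsenum, hs0, L0, hL0⟩ := hS
  set ξ₀ : ℕ → ℝ := fun i => dist x0 (s i) with hξ₀def
  have hreg := hΦ ξ₀ ⟨hs0, L0, hL0⟩
  have h2 : ∀ᶠ n in atTop, Φ.ext (fun i => ξ₀ (n + i)) < ε / 2 :=
    hreg.eventually_lt_const (by linarith)
  obtain ⟨n, hn⟩ := h2.exists
  have hδpos : (0:ℝ) < ε / (2 * (n + 1)) := by positivity
  have hq' := fun i : ℕ => hQd.exists_dist_lt (s i) hδpos
  choose q hqQ hqd using hq'
  refine ⟨n, q, fun i _ => hqQ i, ?_⟩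
  set t : ℕ → X := fenum x0 n q with htdef
  set ξ : ℕ → ℝ := fun i => dist (s i) (t i) with hξdef
  set head : ℕ → ℝ := fun i => if i < n then dist (s i) (q i) else 0 with hheaddef
  set η : ℕ → ℝ := fun i => if i < n then 0 else ξ₀ i with hηdef
  have hsplit : ∀ i, ξ i = head i + η i := by
    intro i
    by_cases h : i < n
    · simp [hξdef, htdef, hheaddef, hηdef, fenum, h]
    · simp [hξdef, htdef, hheaddef, hηdef, hξ₀def, fenum, h, dist_comm]
  set ζ : ℕ → ℝ := fun i => ξ₀ (n + i) with hζdef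
  have hle0 : ∀ m, Φ.toFun (truncF ξ₀ m) ≤ L0 := (phi_trunc_mono Φ ξ₀).ge_of_tendsto hL0
  set B : ℝ := L0 + ∑ i ∈ Finset.range n, ξ₀ i with hBdef
  have hηB : ∀ k, Φ.toFun (truncF η k) ≤ B := by
    intro k
    have hsum : truncF ξ₀ k = truncF η k + truncF (fun i => if i < n then ξ₀ i else 0) k := by
      rw [← truncF_add]
      congr 1
      funext i
      by_cases h : i < n <;> simp [hηdef, h]
    have hrepr : truncF η k
        = truncF ξ₀ k + (-(truncF (fun i => if i < n then ξ₀ i else 0) k)) := by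
      rw [hsum]; abel
    rw [hrepr]
    have hstep := Φ.add_le (truncF ξ₀ k) (-(truncF (fun i => if i < n then ξ₀ i else 0) k))
    rw [phi_neg] at hstep
    refine le_trans hstep (add_le_add (hle0 k) ?_)
    refine le_trans (phi_trunc_le_sum Φ _ k) ?_
    exact sum_cut_le n k ξ₀ fun i => dist_nonneg
  have hshift : ∀ m, Φ.toFun (truncF η (n + m)) = Φ.toFun (truncF ζ m) :=
    fun m => phi_trunc_shift Φ ξ₀ n m
  have hmonoζ := phi_trunc_mono Φ ζ
  have hbζ : BddAbove (Set.range fun m => Φ.toFun (truncF ζ m)) := by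
    refine ⟨B, ?_⟩
    rintro _ ⟨m, rfl⟩
    show Φ.toFun (truncF ζ m) ≤ B
    rw [← hshift m]
    exact hηB (n + m)
  have convζ := tendsto_atTop_ciSup hmonoζ hbζ
  set Lζ : ℝ := ⨆ m, Φ.toFun (truncF ζ m) with hLζdef
  have hextζ : Φ.ext ζ = Lζ := convζ.limUnder_eq
  have hLζlt : Lζ < ε / 2 := by rw [← hextζ]; exact hn
  have convη : Tendsto (fun k => Φ.toFun (truncF η k)) atTop (nhds Lζ) := by
    apply tendsto_of_monotone_shift (phi_trunc_mono Φ η) (n := n)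
    exact convζ.congr fun m => (hshift m).symm
  have hηle : ∀ k, Φ.toFun (truncF η k) ≤ Lζ := (phi_trunc_mono Φ η).ge_of_tendsto convη
  set Sh : ℝ := ∑ i ∈ Finset.range n, head i with hShdef
  have hheadle : ∀ k, Φ.toFun (truncF head k) ≤ Sh := by
    intro k
    refine le_trans (phi_trunc_le_sum Φ head k) ?_
    have : ∀ i ∈ Finset.range k, |head i| = |if i < n then dist (s i) (q i) else 0| :=
      fun i _ => rfl
    rw [Finset.sum_congr rfl this, hShdef]
    refine le_trans (sum_cut_le n k (fun i => dist (s i) (q i)) fun i => dist_nonneg) ?_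
    refine le_of_eq (Finset.sum_congr rfl fun i hi => ?_)
    rw [hheaddef]
    exact (if_pos (Finset.mem_range.mp hi)).symm
  have hShlt : Sh < ε / 2 := by
    have hcard : Sh ≤ (n:ℝ) * (ε / (2 * (n + 1))) := by
      rw [hShdef]
      calc ∑ i ∈ Finset.range n, head i
          ≤ ∑ _i ∈ Finset.range n, (ε / (2 * ((n:ℝ) + 1))) := by
            refine Finset.sum_le_sum fun i hi => ?_
            show (if i < n then dist (s i) (q i) else 0) ≤ ε / (2 * ((n:ℝ) + 1))
            rw [if_pos (Finset.mem_range.mp hi)]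
            exact le_of_lt (by exact_mod_cast hqd i)
        _ = (n:ℝ) * (ε / (2 * ((n:ℝ) + 1))) := by
            rw [Finset.sum_const, Finset.card_range, nsmul_eq_mul]
    have hlt : (n:ℝ) * (ε / (2 * ((n:ℝ) + 1))) < ε / 2 := by
      rw [mul_div_assoc']
      rw [div_lt_div_iff₀ (by positivity) two_pos]
      have hn0 : (0:ℝ) ≤ (n:ℝ) := Nat.cast_nonneg n
      nlinarith
    calc Sh ≤ (n:ℝ) * (ε / (2 * ((n:ℝ) + 1))) := by exact_mod_cast hcard
      _ < ε / 2 := hlt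
  have hξk : ∀ k, Φ.toFun (truncF ξ k) ≤ Sh + Lζ := by
    intro k
    have hdecomp : truncF ξ k = truncF head k + truncF η k := by
      rw [← truncF_add]
      congr 1
      funext i
      exact hsplit i
    rw [hdecomp]
    exact le_trans (Φ.add_le _ _) (add_le_add (hheadle k) (hηle k))
  have hmonoξ := phi_trunc_mono Φ ξ
  have hbξ : BddAbove (Set.range fun k => Φ.toFun (truncF ξ k)) := by
    refine ⟨Sh + Lζ, ?_⟩
    rintro _ ⟨k, rfl⟩
    exact hξk k
  have convξ := tendsto_atTop_ciSup hmonoξ hbξ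
  set L : ℝ := ⨆ k, Φ.toFun (truncF ξ k) with hLdef
  have hLlt : L < ε := lt_of_le_of_lt (ciSup_le hξk) (by linarith)
  have hmemξ : MemLPhi Φ ξ := by
    refine ⟨?_, L, convξ⟩
    apply hs0.congr'
    filter_upwards [eventually_ge_atTop n] with i hi
    rw [hξ₀def]
    simp only [hξdef, htdef, fenum, Nat.not_lt.2 hi, if_neg (Nat.not_lt.2 hi)]
    exact dist_comm x0 (s i)
  have hextξ : Φ.ext ξ = L := convξ.limUnder_eq
  have hmem : L ∈ {r | ∃ s' t' : ℕ → X, IsEnum x0 S s' ∧ IsEnum x0 (fmset x0 n q) t' ∧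
      MemLPhi Φ (fun i => dist (s' i) (t' i)) ∧ r = Φ.ext fun i => dist (s' i) (t' i)} :=
    ⟨s, t, hsenum, isEnum_fmset x0 n q, hmemξ, hextξ.symm⟩
  calc dPhi Φ x0 S (fmset x0 n q) ≤ L := csInf_le (dPhi_bddBelow Φ x0 S (fmset x0 n q)) hmem
    _ < ε := hLlt

/-- If `Φ` is a regular symmetric norm and `X` is a separable metric space with
basepoint `x₀`, then `S_Φ(X, x₀)` is separable; moreover the finite-rank
multisets are dense in `S_Φ(X, x₀)`. -/
theorem sPhi_separable (x0 : X) (Φ : SymmetricNorm) (hΦ : Φ.Regular)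
    [TopologicalSpace.SeparableSpace X] :
    (∃ D : Set (X → ℕ∞), D.Countable ∧ (∀ S ∈ D, MemSPhi Φ x0 S) ∧
      ∀ S, MemSPhi Φ x0 S → ∀ ε > 0, ∃ T ∈ D, dPhi Φ x0 S T < ε) ∧
    (∀ S, MemSPhi Φ x0 S → ∀ ε > 0,
      ∃ T, MemSPhi Φ x0 T ∧ (∃ n : ℕ, HasRank x0 T n) ∧ dPhi Φ x0 S T < ε) := by
  obtain ⟨Q, hQc, hQd⟩ := TopologicalSpace.exists_countable_dense X
  have : Countable Q := hQc.to_subtype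
  constructor
  · set F : (Σ k : ℕ, Fin k → Q) → (X → ℕ∞) :=
      fun p => fmset x0 p.1 (fun i => if h : i < p.1 then (p.2 ⟨i, h⟩ : X) else x0) with hF
    refine ⟨Set.range F, Set.countable_range F, ?_, ?_⟩
    · rintro _ ⟨p, rfl⟩
      exact memSPhi_fmset Φ x0 _ _
    · intro S hS ε hε
      obtain ⟨n, q, hqQ, hlt⟩ := key_approx Φ hΦ x0 S hS hQd hε
      refine ⟨F ⟨n, fun i => ⟨q i, hqQ i i.2⟩⟩, ⟨_, rfl⟩, ?_⟩
      have heq : F ⟨n, fun i => ⟨q i, hqQ i i.2⟩⟩ = fmset x0 n q := by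
        funext x
        show fmset x0 n _ x = fmset x0 n q x
        simp only [fmset]
        by_cases h : x = x0
        · rw [if_pos h, if_pos h]
        · rw [if_neg h, if_neg h]
          congr 1
          ext i
          simp only [Set.mem_setOf_eq]
          constructor
          · rintro ⟨h1, h2⟩
            refine ⟨h1, ?_⟩
            rwa [dif_pos h1] at h2
          · rintro ⟨h1, h2⟩
            exact ⟨h1, by rw [dif_pos h1]; exact h2⟩
      rw [heq]
      exact hlt
  · intro S hS ε hε
    obtain ⟨n, q, _, hlt⟩ := key_approx Φ hΦ x0 S hS dense_univ hε
    exact ⟨fmset x0 n q, memSPhi_fmset Φ x0 n q, hasRank_fmset x0 n q, hlt⟩
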